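/- arXiv:2107.11852 — 4 statements merged into one kernel-verified Lean document; each statement's English description precedes it below -/
import Mathlib

section
/- Let N ∈ ℕ, p ∈ [0,1] and R > 0. For each k ∈ {0,…,N} define the deterministic ergodic capacity C(k) = ∫_{[0,2π]^k} log₂(1 + |∑_{i=1}^k e^{iθ_i}|²) dU_k(θ), where U_k is the uniform probability measure on [0,2π]^k (so C(0) = 0). Let B₁,…,B_N be i.i.d. Bernoulli(p) random variables and φ̃₁,…,φ̃_N be i.i.d. uniform on [0,2π], with all 2N variables jointly independent, and define the random ergodic capacity C_erg = ∫_{[0,2π]^N} log₂(1 + |∑_{i=1}^N B_i e^{i(φ̃_i+θ_i)}|²) dU_N(θ). Then almost surely C_erg = C(∑_{i=1}^N B_i), and consequently the outage probability satisfies P(C_erg < R) = ∑_{k=0}^N (N choose k) p^k (1−p)^{N−k} · 1{C(k) < R}. -/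
open MeasureTheory ProbabilityTheory
open scoped ENNReal

/-- The uniform probability measure on `[0, 2π]`. -/
noncomputable def unifIcc : Measure ℝ :=
  (ENNReal.ofReal (2 * Real.pi))⁻¹ • (volume.restrict (Set.Icc 0 (2 * Real.pi)))

/-- The uniform probability measure on `[0, 2π]^k`. -/
noncomputable def unifPi (k : ℕ) : Measure (Fin k → ℝ) :=
  Measure.pi fun _ => unifIcc

/-- The Bernoulli(p) law on `ℕ` (mass `p` at `1`, mass `1 − p` at `0`). -/
noncomputable def bernoulliNat (p : ℝ) : Measure ℕ :=
  ENNReal.ofReal p • Measure.dirac 1 + ENNReal.ofReal (1 - p) • Measure.dirac 0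

/-- Index-dependent codomain for the joint family `(B₁, …, B_N, φ̃₁, …, φ̃_N)`. -/
def mixSpace (N : ℕ) : Fin N ⊕ Fin N → Type
  | .inl _ => ℕ
  | .inr _ => ℝ

/-- The family `(B₁, …, B_N, φ̃₁, …, φ̃_N)` as a single indexed family of random variables. -/
def mixVar {Ω : Type*} {N : ℕ} (B : Fin N → Ω → ℕ) (φ : Fin N → Ω → ℝ) :
    ∀ j : Fin N ⊕ Fin N, Ω → mixSpace N j
  | .inl i => B i
  | .inr i => φ i

/-- The measurable-space structure on the mixed codomains. -/
def mixMS (N : ℕ) : ∀ j : Fin N ⊕ Fin N, MeasurableSpace (mixSpace N j)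
  | .inl _ => inferInstanceAs (MeasurableSpace ℕ)
  | .inr _ => inferInstanceAs (MeasurableSpace ℝ)

/-- The deterministic ergodic capacity with `k` active links:
`C(k) = ∫_{[0,2π]^k} log₂(1 + |∑_{i=1}^k e^{iθ_i}|²) dU_k(θ)`. -/
noncomputable def ergCap (k : ℕ) : ℝ :=
  ∫ θ : Fin k → ℝ,
    Real.logb 2 (1 + ‖∑ i, Complex.exp ((θ i : ℂ) * Complex.I)‖ ^ 2) ∂(unifPi k)

/-- The random ergodic capacity under phase hopping:
`C_erg(ω) = ∫_{[0,2π]^N} log₂(1 + |∑_{i=1}^N B_i(ω) e^{i(φ̃_i(ω) + θ_i)}|²) dU_N(θ)`. -/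
noncomputable def ergCapRand {Ω : Type*} {N : ℕ} (B : Fin N → Ω → ℕ) (φ : Fin N → Ω → ℝ)
    (ω : Ω) : ℝ :=
  ∫ θ : Fin N → ℝ,
    Real.logb 2 (1 + ‖
      (∑ i, (B i ω : ℂ) * Complex.exp ((↑(φ i ω + θ i) : ℂ) * Complex.I))‖ ^ 2) ∂(unifPi N)


instance fact2pi : Fact (0 < 2 * Real.pi) := ⟨Real.two_pi_pos⟩

noncomputable def haarP : Measure (AddCircle (2 * Real.pi)) :=
  (ENNReal.ofReal (2 * Real.pi))⁻¹ • (volume : Measure (AddCircle (2 * Real.pi)))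

instance : IsProbabilityMeasure unifIcc := by
  constructor
  rw [unifIcc]
  rw [Measure.smul_apply, Measure.restrict_apply_univ, Real.volume_Icc, smul_eq_mul]
  simp [ENNReal.inv_mul_cancel (by simp [Real.pi_pos] : ENNReal.ofReal (2*Real.pi) ≠ 0) ENNReal.ofReal_ne_top]
  exact ENNReal.inv_mul_cancel (by simp [Real.pi_pos]) (ENNReal.mul_ne_top (by simp) ENNReal.ofReal_ne_top)

instance : IsProbabilityMeasure haarP := by
  constructor
  rw [haarP]
  rw [Measure.smul_apply, AddCircle.measure_univ, smul_eq_mul]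
  simp [ENNReal.inv_mul_cancel (by simp [Real.pi_pos] : ENNReal.ofReal (2*Real.pi) ≠ 0) ENNReal.ofReal_ne_top]
  exact ENNReal.inv_mul_cancel (by simp [Real.pi_pos]) (ENNReal.mul_ne_top (by simp) ENNReal.ofReal_ne_top)

instance (k : ℕ) : IsProbabilityMeasure (unifPi k) := by
  rw [unifPi]; infer_instance

instance : haarP.IsAddLeftInvariant := by
  rw [haarP]; infer_instance

lemma mp_mk : MeasurePreserving ((↑) : ℝ → AddCircle (2 * Real.pi)) unifIcc haarP := by
  have h := AddCircle.measurePreserving_mk (2 * Real.pi) 0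
  rw [zero_add] at h
  refine ⟨h.measurable, ?_⟩
  rw [unifIcc, Measure.map_smul, Measure.restrict_congr_set (Ioc_ae_eq_Icc).symm, h.map_eq, haarP]

lemma mpPi (n : ℕ) : MeasurePreserving (fun (θ : Fin n → ℝ) i => ((θ i : AddCircle (2 * Real.pi))))
    (unifPi n) (Measure.pi fun _ => haarP) :=
  measurePreserving_pi _ _ fun _ => mp_mk

noncomputable def gfun : ℂ → ℝ := fun z => Real.logb 2 (1 + ‖z‖ ^ 2)

lemma gfun_cont : Continuous gfun := by
  have h1 : Continuous fun z : ℂ => (1 + ‖z‖ ^ 2) := by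
    continuity
  have h2 : ∀ z : ℂ, (0:ℝ) < 1 + ‖z‖ ^ 2 := fun z => by positivity
  have hlog : Continuous fun z : ℂ => Real.log (1 + ‖z‖ ^ 2) :=
    continuous_iff_continuousAt.mpr fun z => by
      have hl : ContinuousAt Real.log (1 + ‖z‖ ^ 2) :=
        Real.continuousAt_log (ne_of_gt (h2 z))
      show ContinuousAt (Real.log ∘ fun z : ℂ => 1 + ‖z‖ ^ 2) z
      exact ContinuousAt.comp (f := fun z : ℂ => 1 + ‖z‖ ^ 2) (x := z) hl h1.continuousAt
  refine (hlog.mul (continuous_const (y := (Real.log 2)⁻¹))).congr fun z => ?_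
  simp [gfun, Real.logb, div_eq_mul_inv]

noncomputable def efun : AddCircle (2 * Real.pi) → ℂ := fun x => (AddCircle.toCircle x : ℂ)


lemma efun_meas : Measurable efun :=
  (continuous_subtype_val.comp AddCircle.continuous_toCircle).measurable

lemma efun_mk (x : ℝ) : efun (x : AddCircle (2 * Real.pi)) = Complex.exp ((x : ℂ) * Complex.I) := by
  rw [efun, AddCircle.toCircle_apply_mk, div_self (ne_of_gt Real.two_pi_pos), one_mul,
    Circle.coe_exp]





lemma expθ_meas (k : ℕ) (i : Fin k) :
    Measurable fun θ : Fin k → ℝ => Complex.exp ((θ i : ℂ) * Complex.I) :=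
  Complex.measurable_exp.comp
    ((Complex.measurable_ofReal.comp (measurable_pi_apply i)).mul_const Complex.I)

lemma step_main (n : ℕ) (b : Fin n → ℕ) (hb : ∀ i, b i ≤ 1) (fv : Fin n → ℝ) :
    (∫ θ : Fin n → ℝ, Real.logb 2 (1 + ‖
      (∑ i, (b i : ℂ) * Complex.exp ((↑(fv i + θ i) : ℂ) * Complex.I))‖ ^ 2) ∂(unifPi n))
      = ergCap (∑ i, b i) := by
  classical
  -- Step A : remove the phase shifts
  set G : (Fin n → AddCircle (2 * Real.pi)) → ℝ :=
    fun x => gfun (∑ i, (b i : ℂ) * efun (x i)) with hG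
  have hGmeas : Measurable G := by
    apply gfun_cont.measurable.comp
    exact Finset.measurable_sum _ fun i _ =>
      (measurable_const.mul (efun_meas.comp (measurable_pi_apply i)))
  set c : Fin n → AddCircle (2 * Real.pi) := fun i => ((fv i : AddCircle (2 * Real.pi))) with hc
  have hmk : Measurable fun θ : Fin n → ℝ => (fun i => ((θ i : AddCircle (2 * Real.pi)))) :=
    (mpPi n).measurable
  have hA : (∫ θ : Fin n → ℝ, Real.logb 2 (1 + ‖
      (∑ i, (b i : ℂ) * Complex.exp ((↑(fv i + θ i) : ℂ) * Complex.I))‖ ^ 2) ∂(unifPi n))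
      = ∫ θ : Fin n → ℝ, gfun (∑ i, (b i : ℂ) * Complex.exp ((θ i : ℂ) * Complex.I))
          ∂(unifPi n) := by
    have e1 : ∀ θ : Fin n → ℝ, Real.logb 2 (1 + ‖
        (∑ i, (b i : ℂ) * Complex.exp ((↑(fv i + θ i) : ℂ) * Complex.I))‖ ^ 2)
        = G (c + fun i => ((θ i : AddCircle (2 * Real.pi)))) := by
      intro θ
      simp only [hG, gfun, Pi.add_apply, hc, ← QuotientAddGroup.mk_add, efun_mk]
    calc (∫ θ : Fin n → ℝ, Real.logb 2 (1 + ‖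
        (∑ i, (b i : ℂ) * Complex.exp ((↑(fv i + θ i) : ℂ) * Complex.I))‖ ^ 2) ∂(unifPi n))
        = ∫ θ : Fin n → ℝ, G (c + fun i => ((θ i : AddCircle (2 * Real.pi)))) ∂(unifPi n) :=
          integral_congr_ae (Filter.Eventually.of_forall e1)
      _ = ∫ x, G (c + x) ∂(Measure.pi fun _ : Fin n => haarP) := by
          have hGc : Measurable fun x : Fin n → AddCircle (2 * Real.pi) => G (c + x) :=
            hGmeas.comp (measurable_const_add c)
          rw [← (mpPi n).map_eq, integral_map hmk.aemeasurable hGc.aestronglyMeasurable]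
      _ = ∫ x, G x ∂(Measure.pi fun _ : Fin n => haarP) := by
          haveI : (Measure.pi fun _ : Fin n => haarP).IsAddLeftInvariant :=
            Measure.pi.isAddLeftInvariant _
          exact integral_add_left_eq_self G c
      _ = ∫ θ : Fin n → ℝ, G (fun i => ((θ i : AddCircle (2 * Real.pi)))) ∂(unifPi n) := by
          rw [← (mpPi n).map_eq, integral_map hmk.aemeasurable hGmeas.aestronglyMeasurable]
      _ = ∫ θ : Fin n → ℝ, gfun (∑ i, (b i : ℂ) * Complex.exp ((θ i : ℂ) * Complex.I))
            ∂(unifPi n) := by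
          refine integral_congr_ae (Filter.Eventually.of_forall fun θ => ?_)
          simp only [hG, efun_mk]
  rw [hA]
  -- Step B : drop the zero coefficients
  set s : Finset (Fin n) := Finset.univ.filter (fun i => b i = 1) with hs
  have hcard : ∑ i, b i = s.card := by
    have h1 : ∀ i, b i = if b i = 1 then 1 else 0 := fun i => by
      rcases Nat.le_one_iff_eq_zero_or_eq_one.mp (hb i) with h | h <;> simp [h]
    calc ∑ i, b i = ∑ i, if b i = 1 then 1 else 0 := Finset.sum_congr rfl fun i _ => h1 i
      _ = s.card := by rw [hs]; simp
  have hsum : ∀ θ : Fin n → ℝ, (∑ i, (b i : ℂ) * Complex.exp ((θ i : ℂ) * Complex.I))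
      = ∑ i ∈ s, Complex.exp ((θ i : ℂ) * Complex.I) := by
    intro θ
    rw [hs, Finset.sum_filter]
    refine Finset.sum_congr rfl fun i _ => ?_
    rcases Nat.le_one_iff_eq_zero_or_eq_one.mp (hb i) with h | h <;> simp [h]
  simp_rw [hsum, hcard]
  -- reindexing
  set k := s.card with hk
  have hks : Fintype.card {x // x ∈ s} = k := Fintype.card_coe s
  have hksc : Fintype.card {x : Fin n // ¬ x ∈ s} = n - k := by
    rw [Fintype.card_subtype_compl, hks, Fintype.card_fin]
  set e1 : Fin k ≃ {x // x ∈ s} := (Fintype.equivFinOfCardEq hks).symm with he1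
  set e2 : Fin (n - k) ≃ {x : Fin n // ¬ x ∈ s} := (Fintype.equivFinOfCardEq hksc).symm with he2
  set σ : Fin k ⊕ Fin (n - k) ≃ Fin n :=
    (Equiv.sumCongr e1 e2).trans (Equiv.sumCompl (· ∈ s)) with hσdef
  set Φ : (Fin k → ℝ) × (Fin (n - k) → ℝ) → (Fin n → ℝ) :=
    (MeasurableEquiv.piCongrLeft (fun _ : Fin n => ℝ) σ) ∘
      (MeasurableEquiv.sumPiEquivProdPi (fun _ : Fin k ⊕ Fin (n - k) => ℝ)).symm with hΦdef
  have mpσ : MeasurePreserving Φ ((unifPi k).prod (unifPi (n - k))) (unifPi n) := by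
    have h1 := measurePreserving_piCongrLeft (fun _ : Fin n => unifIcc) σ
    have h2 := measurePreserving_sumPiEquivProdPi_symm
      (X := fun _ : Fin k ⊕ Fin (n - k) => ℝ) (fun _ => unifIcc)
    exact h1.comp h2
  have hmeasF : Measurable fun θ : Fin n → ℝ =>
      gfun (∑ i ∈ s, Complex.exp ((θ i : ℂ) * Complex.I)) :=
    gfun_cont.measurable.comp (Finset.measurable_sum _ fun i _ => expθ_meas n i)
  have hΦeval : ∀ (y : (Fin k → ℝ) × (Fin (n - k) → ℝ)),
      (∑ i ∈ s, Complex.exp (((Φ y) i : ℂ) * Complex.I))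
      = ∑ j : Fin k, Complex.exp ((y.1 j : ℂ) * Complex.I) := by
    intro y
    rw [← Finset.sum_coe_sort s (fun i => Complex.exp (((Φ y) i : ℂ) * Complex.I)),
      ← Equiv.sum_comp e1]
    refine Finset.sum_congr rfl fun j _ => ?_
    have h2 : ((e1 j : Fin n)) = σ (Sum.inl j) := rfl
    have h3 : Φ y (σ (Sum.inl j)) = y.1 j := by
      rw [hΦdef]
      simp only [Function.comp_apply, MeasurableEquiv.coe_piCongrLeft,
        MeasurableEquiv.coe_sumPiEquivProdPi_symm]
      rw [show y = (y.1, y.2) from rfl]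
      exact Equiv.piCongrLeft_sumInl (fun _ : Fin n => ℝ) σ y.1 y.2 j
    rw [h2, h3]
  have hmap : Measure.map Prod.fst ((unifPi k).prod (unifPi (n - k))) = unifPi k := by
    rw [Measure.map_fst_prod]; simp
  have hmeasK : Measurable fun x : Fin k → ℝ =>
      gfun (∑ j : Fin k, Complex.exp ((x j : ℂ) * Complex.I)) :=
    gfun_cont.measurable.comp (Finset.measurable_sum _ fun j _ => expθ_meas k j)
  calc (∫ θ : Fin n → ℝ, gfun (∑ i ∈ s, Complex.exp ((θ i : ℂ) * Complex.I)) ∂(unifPi n))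
      = ∫ y, gfun (∑ i ∈ s, Complex.exp (((Φ y) i : ℂ) * Complex.I))
          ∂((unifPi k).prod (unifPi (n - k))) := by
        rw [← mpσ.map_eq, integral_map mpσ.measurable.aemeasurable hmeasF.aestronglyMeasurable]
    _ = ∫ y, gfun (∑ j : Fin k, Complex.exp (((y : (Fin k → ℝ) × (Fin (n - k) → ℝ)).1 j : ℂ)
          * Complex.I)) ∂((unifPi k).prod (unifPi (n - k))) :=
        integral_congr_ae (Filter.Eventually.of_forall fun y => congrArg gfun (hΦeval y))
    _ = ∫ x : Fin k → ℝ, gfun (∑ j : Fin k, Complex.exp ((x j : ℂ) * Complex.I)) ∂(unifPi k) := by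
        have h := integral_map (μ := (unifPi k).prod (unifPi (n - k)))
          measurable_fst.aemeasurable hmeasK.aestronglyMeasurable
        rw [hmap] at h
        exact h.symm
    _ = ergCap k := by rw [ergCap]; rfl

lemma sum_eq_card_filter {n : ℕ} (b : Fin n → ℕ) (hb : ∀ i, b i ≤ 1) [DecidableEq ℕ] :
    ∑ i, b i = (Finset.univ.filter fun i => b i = 1).card := by
  have h1 : ∀ i, b i = if b i = 1 then 1 else 0 := fun i => by
    rcases Nat.le_one_iff_eq_zero_or_eq_one.mp (hb i) with h | h <;> simp [h]
  calc ∑ i, b i = ∑ i, if b i = 1 then 1 else 0 := Finset.sum_congr rfl fun i _ => h1 i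
    _ = _ := by simp


/-- with i.i.d. Bernoulli(p) gains `B_i` and i.i.d. uniform phases `φ̃_i`, all
jointly independent, the random ergodic capacity `C_erg` is a.s. equal to `C(∑ i B_i)`, and
`P(C_erg < R) = ∑_{k=0}^N (N choose k) p^k (1−p)^{N−k} 1{C(k) < R}`. -/
theorem stmt0 {Ω : Type*} [MeasurableSpace Ω] (P : Measure Ω) [IsProbabilityMeasure P]
    (N : ℕ) (p : ℝ) (hp0 : 0 ≤ p) (hp1 : p ≤ 1) (R : ℝ) (hR : 0 < R)
    (B : Fin N → Ω → ℕ) (φ : Fin N → Ω → ℝ)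
    (hBmeas : ∀ i, Measurable (B i)) (hφmeas : ∀ i, Measurable (φ i))
    (hBlaw : ∀ i, Measure.map (B i) P = bernoulliNat p)
    (hφlaw : ∀ i, Measure.map (φ i) P = unifIcc)
    (hindep : @iIndepFun _ _ _ _ (mixMS N) (mixVar B φ) P) :
    (∀ᵐ ω ∂P, ergCapRand B φ ω = ergCap (∑ i, B i ω)) ∧
    (P {ω | ergCapRand B φ ω < R}).toReal =
      ∑ k ∈ Finset.range (N + 1),
        (N.choose k : ℝ) * p ^ k * (1 - p) ^ (N - k) * (if ergCap k < R then 1 else 0) := by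
  classical
  -- laws of single B i on sets
  have hBval : ∀ (i : Fin N) (S : Set ℕ), P (B i ⁻¹' S) = bernoulliNat p S := fun i S => by
    rw [← hBlaw i, Measure.map_apply (hBmeas i) ((Set.to_countable _).measurableSet)]
  -- almost surely every B i is 0 or 1
  have hae : ∀ᵐ ω ∂P, ∀ i, B i ω ≤ 1 := by
    rw [MeasureTheory.ae_all_iff]
    intro i
    rw [ae_iff]
    have h1 : {ω | ¬ B i ω ≤ 1} = B i ⁻¹' {x : ℕ | ¬ x ≤ 1} := rfl
    rw [h1, hBval i]
    simp [bernoulliNat]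
  -- Part 1
  have part1 : ∀ᵐ ω ∂P, ergCapRand B φ ω = ergCap (∑ i, B i ω) := by
    filter_upwards [hae] with ω hω
    exact step_main N (fun i => B i ω) hω (fun i => φ i ω)
  refine ⟨part1, ?_⟩
  -- Part 2
  set K : Ω → ℕ := fun ω => ∑ i, B i ω with hK
  have hKmeas : Measurable K := Finset.measurable_sum _ fun i _ => hBmeas i
  -- independence product formula
  have hprod : ∀ c : Fin N → ℕ, P (⋂ i, B i ⁻¹' {c i}) = ∏ i, P (B i ⁻¹' {c i}) := by
    intro c
    set sets : (Fin N ⊕ Fin N) → Set Ω :=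
      fun j => Sum.rec (fun i => B i ⁻¹' {c i}) (fun _ => Set.univ) j with hsets
    have hmem : ∀ j ∈ Finset.univ.image (Sum.inl : Fin N → Fin N ⊕ Fin N),
        MeasurableSet[(mixMS N j).comap (mixVar B φ j)] (sets j) := by
      intro j hj
      simp only [Finset.mem_image, Finset.mem_univ, true_and] at hj
      obtain ⟨i, rfl⟩ := hj
      exact ⟨{c i}, MeasurableSpace.measurableSet_top, rfl⟩
    have h := hindep.meas_biInter (S := Finset.univ.image Sum.inl) hmem
    rw [Finset.prod_image (fun x _ y _ hxy => Sum.inl_injective hxy)] at h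
    have hI : (⋂ j ∈ Finset.univ.image (Sum.inl : Fin N → Fin N ⊕ Fin N), sets j)
        = ⋂ i, B i ⁻¹' {c i} := by
      ext ω
      simp [hsets]
    rw [hI] at h
    exact h
  -- the elementary events
  set Es : Finset (Fin N) → Set Ω := fun s => ⋂ i, B i ⁻¹' {if i ∈ s then 1 else 0} with hEs
  have hEsmeas : ∀ s, MeasurableSet (Es s) := fun s =>
    MeasurableSet.iInter fun i => (hBmeas i) ((Set.to_countable _).measurableSet)
  have hEsP : ∀ s : Finset (Fin N), P (Es s)
      = ENNReal.ofReal p ^ s.card * ENNReal.ofReal (1 - p) ^ (N - s.card) := by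
    intro s
    rw [hEs]
    rw [hprod (fun i => if i ∈ s then 1 else 0)]
    have hv : ∀ i : Fin N, P (B i ⁻¹' {if i ∈ s then 1 else 0})
        = if i ∈ s then ENNReal.ofReal p else ENNReal.ofReal (1 - p) := by
      intro i
      by_cases h : i ∈ s <;> simp [h, hBval, bernoulliNat]
    simp_rw [hv]
    rw [Finset.prod_ite, Finset.prod_const, Finset.prod_const]
    congr 2
    · rw [Finset.filter_mem_eq_inter, Finset.univ_inter]
    · rw [Finset.filter_not, Finset.filter_mem_eq_inter, Finset.univ_inter,
        Finset.card_sdiff_of_subset (Finset.subset_univ s), Finset.card_univ, Fintype.card_fin]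
  have hdisj : ∀ s t : Finset (Fin N), s ≠ t → Disjoint (Es s) (Es t) := by
    intro s t hst
    rw [Set.disjoint_left]
    intro ω hsω htω
    obtain ⟨i, hi⟩ : ∃ i, ¬ (i ∈ s ↔ i ∈ t) := by
      by_contra h
      push_neg at h
      exact hst (Finset.ext fun i => h i)
    have h1 : B i ω = if i ∈ s then 1 else 0 := by
      have := Set.mem_iInter.mp hsω i; simpa using this
    have h2 : B i ω = if i ∈ t then 1 else 0 := by
      have := Set.mem_iInter.mp htω i; simpa using this
    by_cases hs' : i ∈ s <;> by_cases ht' : i ∈ t <;>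
      simp [hs', ht'] at h1 h2 hi <;> omega
  -- binomial law of K
  have hKbin : ∀ k : ℕ, P {ω | K ω = k}
      = (N.choose k : ℝ≥0∞) * (ENNReal.ofReal p ^ k * ENNReal.ofReal (1 - p) ^ (N - k)) := by
    intro k
    have hset : {ω | K ω = k}
        =ᵐ[P] ⋃ s ∈ Finset.powersetCard k (Finset.univ : Finset (Fin N)), Es s := by
      rw [Filter.eventuallyEq_set]
      filter_upwards [hae] with ω hω
      simp only [Set.mem_setOf_eq, Set.mem_iUnion, hEs, Set.mem_iInter, Set.mem_preimage,
        Set.mem_singleton_iff, Finset.mem_powersetCard, exists_prop]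
      constructor
      · intro hk
        refine ⟨Finset.univ.filter (fun i => B i ω = 1), ⟨Finset.subset_univ _, ?_⟩, ?_⟩
        · rw [← sum_eq_card_filter (fun i => B i ω) hω]
          exact hk
        · intro i
          rcases Nat.le_one_iff_eq_zero_or_eq_one.mp (hω i) with h | h <;> simp [h]
      · rintro ⟨s, ⟨-, hcard⟩, hsω⟩
        have : K ω = ∑ i : Fin N, if i ∈ s then 1 else 0 :=
          Finset.sum_congr rfl fun i _ => hsω i
        rw [hK] at this ⊢
        rw [this, Finset.sum_ite_mem, Finset.univ_inter, Finset.sum_const, smul_eq_mul,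
          mul_one, hcard]
    rw [measure_congr hset,
      measure_biUnion_finset (fun s hs t ht hst => hdisj s t hst) (fun s _ => hEsmeas s)]
    rw [Finset.sum_congr rfl (fun s hs => by
      rw [hEsP s, (Finset.mem_powersetCard.mp hs).2])]
    rw [Finset.sum_const, Finset.card_powersetCard, Finset.card_univ, Fintype.card_fin,
      nsmul_eq_mul]
  -- outage probability
  set A : Finset ℕ := (Finset.range (N + 1)).filter (fun k => ergCap k < R) with hA
  have hsets2 : {ω | ergCapRand B φ ω < R} =ᵐ[P] ⋃ k ∈ A, {ω | K ω = k} := by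
    rw [Filter.eventuallyEq_set]
    filter_upwards [part1, hae] with ω h1 h2
    simp only [Set.mem_setOf_eq, Set.mem_iUnion, hA, Finset.mem_filter, Finset.mem_range,
      exists_prop]
    constructor
    · intro h
      have hKN : K ω ≤ N := by
        calc K ω = ∑ i, B i ω := rfl
          _ ≤ ∑ _i : Fin N, 1 := Finset.sum_le_sum fun i _ => h2 i
          _ = N := by simp
      refine ⟨K ω, ⟨by omega, ?_⟩, rfl⟩
      rw [← show ergCapRand B φ ω = ergCap (K ω) from h1]
      exact h
    · rintro ⟨k, ⟨-, hk⟩, hKk⟩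
      rw [show ergCapRand B φ ω = ergCap (K ω) from h1, hKk]
      exact hk
  have hfinal : P {ω | ergCapRand B φ ω < R} = ∑ k ∈ A, P {ω | K ω = k} := by
    rw [measure_congr hsets2]
    exact measure_biUnion_finset
      (fun k _ l _ hkl => Set.disjoint_left.2 fun ω h1 h2 => hkl (h1 ▸ h2))
      (fun k _ => hKmeas (Set.to_countable {k}).measurableSet)
  rw [hfinal, ENNReal.toReal_sum (fun k _ => measure_ne_top P _)]
  rw [hA, Finset.sum_filter]
  refine Finset.sum_congr rfl fun k hk => ?_
  by_cases h : ergCap k < R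
  · rw [if_pos h, if_pos h, mul_one, hKbin k, ENNReal.toReal_mul, ENNReal.toReal_mul,
      ENNReal.toReal_pow, ENNReal.toReal_pow, ENNReal.toReal_ofReal hp0,
      ENNReal.toReal_ofReal (sub_nonneg.2 hp1), ENNReal.toReal_natCast, mul_assoc]
  · rw [if_neg h, if_neg h, mul_zero]
end

section
/- Let N ∈ ℕ, p ∈ [0,1], R > 0, a ≥ 0 and φ_LOS ∈ ℝ. For each k ∈ {0,…,N} define C_LOS(k) = ∫_{[0,2π]^k} log₂(1 + |a + ∑_{i=1}^k e^{iθ_i}|²) dU_k(θ), where U_k is the uniform probability measure on [0,2π]^k; in particular C_LOS(0) = log₂(1+a²). Let B₁,…,B_N be i.i.d. Bernoulli(p) and φ̃₁,…,φ̃_N i.i.d. uniform on [0,2π], all jointly independent, and define C_erg,LOS = ∫_{[0,2π]^N} log₂(1 + |a e^{iφ_LOS} + ∑_{i=1}^N B_i e^{i(φ̃_i+θ_i)}|²) dU_N(θ). Then almost surely C_erg,LOS = C_LOS(∑_{i=1}^N B_i), and the outage probability satisfies P(C_erg,LOS < R) = ∑_{k=0}^N (N choose k) p^k (1−p)^{N−k}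 · 1{C_LOS(k) < R}. -/
open MeasureTheory ProbabilityTheory
open scoped ENNReal

/-- The deterministic LOS ergodic capacity with `k` active links:
`C_LOS(k) = ∫_{[0,2π]^k} log₂(1 + |a + ∑_{i=1}^k e^{iθ_i}|²) dU_k(θ)`. -/
noncomputable def ergCapLOS (a : ℝ) (k : ℕ) : ℝ :=
  ∫ θ : Fin k → ℝ,
    Real.logb 2 (1 + ‖(a : ℂ) + ∑ i, Complex.exp ((θ i : ℂ) * Complex.I)‖ ^ 2)
    ∂(unifPi k)

/-- The random ergodic capacity under phase hopping with a LOS component `a e^{iφ_LOS}`: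
`C_erg,LOS(ω) = ∫_{[0,2π]^N} log₂(1 + |a e^{iφ_LOS} + ∑_{i=1}^N B_i(ω) e^{i(φ̃_i(ω) + θ_i)}|²) dU_N(θ)`. -/
noncomputable def ergCapRandLOS {Ω : Type*} {N : ℕ} (a φLOS : ℝ)
    (B : Fin N → Ω → ℕ) (φ : Fin N → Ω → ℝ) (ω : Ω) : ℝ :=
  ∫ θ : Fin N → ℝ,
    Real.logb 2 (1 + ‖
      ((a : ℂ) * Complex.exp ((φLOS : ℂ) * Complex.I) +
        ∑ i, (B i ω : ℂ) * Complex.exp ((↑(φ i ω + θ i) : ℂ) * Complex.I))‖ ^ 2) ∂(unifPi N)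

lemma twopi_pos : (0:ℝ) < 2 * Real.pi := by positivity

instance inst_s1 : IsProbabilityMeasure unifIcc := by
  constructor
  rw [unifIcc, Measure.smul_apply, Measure.restrict_apply_univ, Real.volume_Icc]
  simp only [sub_zero, smul_eq_mul]
  rw [ENNReal.inv_mul_cancel]
  · simp [Real.pi_pos, twopi_pos.ne']
  · exact ENNReal.ofReal_ne_top

instance inst_s1_2 (k : ℕ) : IsProbabilityMeasure (unifPi k) := by
  unfold unifPi; infer_instance

lemma unifIcc_compl_Icc : unifIcc (Set.Icc 0 (2 * Real.pi))ᶜ = 0 := by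
  rw [unifIcc, Measure.smul_apply, Measure.restrict_apply (measurableSet_Icc.compl)]
  simp

lemma unifPi_ae_mem_box (n : ℕ) :
    ∀ᵐ θ ∂(unifPi n), θ ∈ Set.pi Set.univ (fun _ : Fin n => Set.Icc 0 (2 * Real.pi)) := by
  rw [ae_iff]
  have : {θ : Fin n → ℝ | ¬ θ ∈ Set.pi Set.univ fun _ => Set.Icc 0 (2*Real.pi)} ⊆
      ⋃ i, Function.eval i ⁻¹' (Set.Icc 0 (2*Real.pi))ᶜ := by
    intro θ hθ
    simp only [Set.mem_pi, Set.mem_univ, forall_true_left, not_forall] at hθ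
    obtain ⟨i, hi⟩ := hθ
    exact Set.mem_iUnion.2 ⟨i, hi⟩
  refine measure_mono_null this (measure_iUnion_null fun i => ?_)
  exact Measure.pi_eval_preimage_null _ unifIcc_compl_Icc

lemma integrable_unifPi {n : ℕ} {g : (Fin n → ℝ) → ℝ} (hg : Continuous g) :
    Integrable g (unifPi n) := by
  obtain ⟨C, hC⟩ := (isCompact_pi_infinite fun _ : Fin n => isCompact_Icc).exists_bound_of_continuousOn hg.continuousOn
  refine Integrable.mono' (integrable_const C) hg.aestronglyMeasurable ?_
  filter_upwards [unifPi_ae_mem_box n] with θ hθ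
  exact hC θ fun i => hθ i trivial

lemma unifIcc_shift (g : ℝ → ℝ) (hg : Continuous g)
    (hper : Function.Periodic g (2 * Real.pi)) (c : ℝ) :
    ∫ x, g (c + x) ∂unifIcc = ∫ x, g x ∂unifIcc := by
  rw [unifIcc, integral_smul_measure, integral_smul_measure]
  congr 1
  rw [MeasureTheory.integral_Icc_eq_integral_Ioc, MeasureTheory.integral_Icc_eq_integral_Ioc,
    ← intervalIntegral.integral_of_le twopi_pos.le, ← intervalIntegral.integral_of_le twopi_pos.le,
    intervalIntegral.integral_comp_add_left g c]
  simpa using hper.intervalIntegral_add_eq c 0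

lemma continuous_piFinSuccAbove (n : ℕ) :
    Continuous (⇑(MeasurableEquiv.piFinSuccAbove (fun _ : Fin (n+1) => ℝ) 0)) := by
  have : ⇑(MeasurableEquiv.piFinSuccAbove (fun _ : Fin (n+1) => ℝ) 0)
      = fun θ => (θ 0, fun j => θ ((0 : Fin (n+1)).succAbove j)) := rfl
  rw [this]
  exact (continuous_apply 0).prodMk (continuous_pi fun j => continuous_apply _)

lemma integrable_prodIcc {n : ℕ} {g : ℝ × (Fin n → ℝ) → ℝ} (hg : Continuous g) :
    Integrable g (unifIcc.prod (unifPi n)) := by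
  have mp := measurePreserving_piFinSuccAbove (fun _ : Fin (n+1) => unifIcc) 0
  exact (mp.integrable_comp hg.aestronglyMeasurable).1
    (integrable_unifPi (hg.comp (continuous_piFinSuccAbove n)))

lemma cons_integral {n : ℕ} (F : ℝ × (Fin n → ℝ) → ℝ) (hF : Continuous F) :
    ∫ θ : Fin (n+1) → ℝ, F (θ 0, fun i => θ i.succ) ∂unifPi (n+1)
      = ∫ x, ∫ y, F (x, y) ∂unifPi n ∂unifIcc := by
  unfold unifPi
  have mp := measurePreserving_piFinSuccAbove (fun _ : Fin (n+1) => unifIcc) 0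
  have h1 : ∫ θ : Fin (n+1) → ℝ, F (θ 0, fun i => θ i.succ) ∂(Measure.pi fun _ => unifIcc)
      = ∫ z, F z ∂(unifIcc.prod (Measure.pi fun _ : Fin n => unifIcc)) := by
    rw [← mp.integral_comp' F]
    refine integral_congr_ae (Filter.Eventually.of_forall fun θ => ?_)
    have : (MeasurableEquiv.piFinSuccAbove (fun _ : Fin (n+1) => ℝ) 0) θ
        = (θ 0, fun j => θ ((0 : Fin (n+1)).succAbove j)) := rfl
    simp only [this, Fin.succAbove_zero]
  rw [h1]
  exact integral_prod F (integrable_prodIcc (n := n) hF)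

noncomputable def K (k : ℕ) (f : ℂ → ℝ) : ℝ :=
  ∫ θ : Fin k → ℝ, f (∑ i, Complex.exp ((θ i : ℂ) * Complex.I)) ∂unifPi k

lemma continuous_sumExp (n : ℕ) :
    Continuous (fun θ : Fin n → ℝ => ∑ i, Complex.exp ((θ i : ℂ) * Complex.I)) :=
  continuous_finset_sum _ fun i _ =>
    Complex.continuous_exp.comp ((Complex.continuous_ofReal.comp (continuous_apply i)).mul
      continuous_const)

lemma K_succ (k : ℕ) (f : ℂ → ℝ) (hf : Continuous f) :
    K (k+1) f = ∫ x, K k (fun z => f (Complex.exp ((x : ℂ) * Complex.I) + z)) ∂unifIcc := by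
  have hF : Continuous (fun p : ℝ × (Fin k → ℝ) =>
      f (Complex.exp ((p.1 : ℂ) * Complex.I) + ∑ i, Complex.exp ((p.2 i : ℂ) * Complex.I))) :=
    hf.comp ((Complex.continuous_exp.comp ((Complex.continuous_ofReal.comp continuous_fst).mul
      continuous_const)).add ((continuous_sumExp k).comp continuous_snd))
  have := cons_integral (fun p : ℝ × (Fin k → ℝ) =>
    f (Complex.exp ((p.1 : ℂ) * Complex.I) + ∑ i, Complex.exp ((p.2 i : ℂ) * Complex.I))) hF
  simp only [K] at this ⊢
  rw [← this]
  refine integral_congr_ae (Filter.Eventually.of_forall fun θ => ?_)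
  simp only [Fin.sum_univ_succ]

lemma master (n : ℕ) : ∀ (f : ℂ → ℝ), Continuous f → ∀ (b : Fin n → ℕ), (∀ i, b i ≤ 1) →
    ∀ (δ : Fin n → ℝ),
    ∫ θ : Fin n → ℝ, f (∑ i, (b i : ℂ) * Complex.exp ((↑(δ i + θ i) : ℂ) * Complex.I)) ∂unifPi n
      = K (∑ i, b i) f := by
  induction n with
  | zero =>
    intro f hf b hb δ
    rw [show (∑ i : Fin 0, b i) = 0 from rfl]
    simp [K]
  | succ n ih =>
    intro f hf b hb δ
    set m := ∑ i : Fin n, b i.succ with hm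
    have hsum : ∑ i : Fin (n+1), b i = b 0 + m := by rw [Fin.sum_univ_succ]
    have hF : Continuous (fun p : ℝ × (Fin n → ℝ) =>
        f ((b 0 : ℂ) * Complex.exp ((↑(δ 0 + p.1) : ℂ) * Complex.I)
          + ∑ i, (b i.succ : ℂ) * Complex.exp ((↑(δ i.succ + p.2 i) : ℂ) * Complex.I))) := by
      refine hf.comp (Continuous.add ?_ ?_)
      · exact continuous_const.mul (Complex.continuous_exp.comp
          ((Complex.continuous_ofReal.comp (continuous_const.add continuous_fst)).mul
            continuous_const))
      · exact continuous_finset_sum _ fun i _ => continuous_const.mul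
          (Complex.continuous_exp.comp ((Complex.continuous_ofReal.comp
            (continuous_const.add ((continuous_apply i).comp continuous_snd))).mul
            continuous_const))
    have h1 : ∫ θ : Fin (n+1) → ℝ,
        f (∑ i, (b i : ℂ) * Complex.exp ((↑(δ i + θ i) : ℂ) * Complex.I)) ∂unifPi (n+1)
        = ∫ x, ∫ y : Fin n → ℝ,
            f ((b 0 : ℂ) * Complex.exp ((↑(δ 0 + x) : ℂ) * Complex.I)
              + ∑ i, (b i.succ : ℂ) * Complex.exp ((↑(δ i.succ + y i) : ℂ) * Complex.I))
            ∂unifPi n ∂unifIcc := by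
      rw [← cons_integral _ hF]
      refine integral_congr_ae (Filter.Eventually.of_forall fun θ => ?_)
      simp only [Fin.sum_univ_succ]
    have h2 : ∀ x : ℝ, ∫ y : Fin n → ℝ,
        f ((b 0 : ℂ) * Complex.exp ((↑(δ 0 + x) : ℂ) * Complex.I)
          + ∑ i, (b i.succ : ℂ) * Complex.exp ((↑(δ i.succ + y i) : ℂ) * Complex.I)) ∂unifPi n
        = K m (fun z => f ((b 0 : ℂ) * Complex.exp ((↑(δ 0 + x) : ℂ) * Complex.I) + z)) :=
      fun x => ih _ (hf.comp (continuous_const.add continuous_id)) _ (fun i => hb i.succ) _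
    rw [h1, integral_congr_ae (Filter.Eventually.of_forall h2)]
    rcases Nat.le_one_iff_eq_zero_or_eq_one.1 (hb 0) with h | h
    · simp only [h, Nat.cast_zero, zero_mul, zero_add, integral_const, measure_univ,
        ENNReal.toReal_one, probReal_univ, one_smul]
      rw [hsum, h, Nat.zero_add]
    · simp only [h, Nat.cast_one, one_mul]
      rw [hsum, h, Nat.add_comm 1 m, K_succ m f hf]
      have hGc : Continuous (fun p : ℝ × (Fin m → ℝ) =>
          f (Complex.exp ((↑(δ 0 + p.1) : ℂ) * Complex.I)
            + ∑ i, Complex.exp ((↑(p.2 i) : ℂ) * Complex.I))) :=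
        hf.comp ((Complex.continuous_exp.comp ((Complex.continuous_ofReal.comp
          (continuous_const.add continuous_fst)).mul continuous_const)).add
          ((continuous_sumExp m).comp continuous_snd))
      have hHc : Continuous (fun p : ℝ × (Fin m → ℝ) =>
          f (Complex.exp ((↑p.1 : ℂ) * Complex.I)
            + ∑ i, Complex.exp ((↑(p.2 i) : ℂ) * Complex.I))) :=
        hf.comp ((Complex.continuous_exp.comp ((Complex.continuous_ofReal.comp
          continuous_fst).mul continuous_const)).add
          ((continuous_sumExp m).comp continuous_snd))
      calc ∫ x, K m (fun z => f (Complex.exp ((↑(δ 0 + x) : ℂ) * Complex.I) + z)) ∂unifIcc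
          = ∫ x, ∫ y : Fin m → ℝ, f (Complex.exp ((↑(δ 0 + x) : ℂ) * Complex.I)
              + ∑ i, Complex.exp ((↑(y i) : ℂ) * Complex.I)) ∂unifPi m ∂unifIcc := rfl
        _ = ∫ p : ℝ × (Fin m → ℝ), f (Complex.exp ((↑(δ 0 + p.1) : ℂ) * Complex.I)
              + ∑ i, Complex.exp ((↑(p.2 i) : ℂ) * Complex.I)) ∂(unifIcc.prod (unifPi m)) :=
            (integral_prod _ (integrable_prodIcc hGc)).symm
        _ = ∫ y : Fin m → ℝ, ∫ x, f (Complex.exp ((↑(δ 0 + x) : ℂ) * Complex.I)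
              + ∑ i, Complex.exp ((↑(y i) : ℂ) * Complex.I)) ∂unifIcc ∂unifPi m :=
            integral_prod_symm _ (integrable_prodIcc hGc)
        _ = ∫ y : Fin m → ℝ, ∫ x, f (Complex.exp ((↑x : ℂ) * Complex.I)
              + ∑ i, Complex.exp ((↑(y i) : ℂ) * Complex.I)) ∂unifIcc ∂unifPi m := by
            refine integral_congr_ae (Filter.Eventually.of_forall fun y => ?_)
            have hper : Function.Periodic (fun x : ℝ => f (Complex.exp ((↑x : ℂ) * Complex.I)
                + ∑ i, Complex.exp ((↑(y i) : ℂ) * Complex.I))) (2 * Real.pi) := by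
              intro x
              have : ((↑(x + 2 * Real.pi) : ℂ)) * Complex.I = (↑x : ℂ) * Complex.I
                  + 2 * (↑Real.pi : ℂ) * Complex.I := by push_cast; ring
              simp only [this, Complex.exp_add, Complex.exp_two_pi_mul_I, mul_one]
            exact unifIcc_shift _ (hf.comp ((Complex.continuous_exp.comp
              ((Complex.continuous_ofReal).mul continuous_const)).add continuous_const))
              hper (δ 0)
        _ = ∫ p : ℝ × (Fin m → ℝ), f (Complex.exp ((↑p.1 : ℂ) * Complex.I)
              + ∑ i, Complex.exp ((↑(p.2 i) : ℂ) * Complex.I)) ∂(unifIcc.prod (unifPi m)) :=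
            (integral_prod_symm _ (integrable_prodIcc hHc)).symm
        _ = ∫ x, ∫ y : Fin m → ℝ, f (Complex.exp ((↑x : ℂ) * Complex.I)
              + ∑ i, Complex.exp ((↑(y i) : ℂ) * Complex.I)) ∂unifPi m ∂unifIcc :=
            integral_prod _ (integrable_prodIcc hHc)
        _ = ∫ x, K m (fun z => f (Complex.exp ((↑x : ℂ) * Complex.I) + z)) ∂unifIcc := rfl

noncomputable def fA (a : ℝ) : ℂ → ℝ :=
  fun z => Real.logb 2 (1 + ‖(a : ℂ) + z‖ ^ 2)

lemma fA_cont (a : ℝ) : Continuous (fA a) := by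
  have h : Continuous fun z : ℂ => 1 + ‖(a:ℂ) + z‖ ^ 2 :=
    continuous_const.add ((continuous_norm.comp (continuous_const.add continuous_id)).pow 2)
  have hpos : ∀ z : ℂ, (1 + ‖(a:ℂ) + z‖ ^ 2) ≠ 0 := by
    intro z; positivity
  exact (h.log hpos).div_const _

lemma rot (a φL : ℝ) (n : ℕ) (b : Fin n → ℕ) (ψ θ : Fin n → ℝ) :
    ‖(a:ℂ) * Complex.exp ((φL:ℂ) * Complex.I)
      + ∑ i, (b i : ℂ) * Complex.exp ((↑(ψ i + θ i) : ℂ) * Complex.I)‖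
    = ‖(a:ℂ) + ∑ i, (b i : ℂ) * Complex.exp ((↑(ψ i - φL + θ i) : ℂ) * Complex.I)‖ := by
  have key : (a:ℂ) * Complex.exp ((φL:ℂ) * Complex.I)
      + ∑ i, (b i : ℂ) * Complex.exp ((↑(ψ i + θ i) : ℂ) * Complex.I)
      = Complex.exp ((φL:ℂ) * Complex.I) *
        ((a:ℂ) + ∑ i, (b i : ℂ) * Complex.exp ((↑(ψ i - φL + θ i) : ℂ) * Complex.I)) := by
    rw [mul_add, Finset.mul_sum]
    congr 1
    · ring
    refine Finset.sum_congr rfl fun i _ => ?_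
    have : Complex.exp ((φL:ℂ) * Complex.I) * Complex.exp ((↑(ψ i - φL + θ i) : ℂ) * Complex.I)
        = Complex.exp ((↑(ψ i + θ i) : ℂ) * Complex.I) := by
      rw [← Complex.exp_add]
      congr 1
      push_cast
      ring
    rw [← this]
    ring
  rw [key, norm_mul, Complex.norm_exp]
  simp

lemma erg_eq (a φL : ℝ) {n : ℕ} (b : Fin n → ℕ) (hb : ∀ i, b i ≤ 1) (ψ : Fin n → ℝ) :
    ∫ θ : Fin n → ℝ, Real.logb 2 (1 + ‖(a:ℂ) * Complex.exp ((φL:ℂ) * Complex.I)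
        + ∑ i, (b i : ℂ) * Complex.exp ((↑(ψ i + θ i) : ℂ) * Complex.I)‖ ^ 2) ∂unifPi n
      = K (∑ i, b i) (fA a) := by
  rw [← master n (fA a) (fA_cont a) b hb (fun i => ψ i - φL)]
  refine integral_congr_ae (Filter.Eventually.of_forall fun θ => ?_)
  simp only [fA, rot a φL n b ψ θ]

lemma bernoulliNat_prob {p : ℝ} (hp0 : 0 ≤ p) (hp1 : p ≤ 1) :
    IsProbabilityMeasure (bernoulliNat p) := by
  constructor
  simp only [bernoulliNat, Measure.add_apply, Measure.smul_apply, measure_univ, smul_eq_mul,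
    mul_one]
  rw [← ENNReal.ofReal_add hp0 (by linarith), ENNReal.ofReal_one.symm]
  norm_num

lemma bernoulliNat_one (p : ℝ) : bernoulliNat p {1} = ENNReal.ofReal p := by
  simp [bernoulliNat, Measure.dirac_apply]

lemma bernoulliNat_zero (p : ℝ) : bernoulliNat p {0} = ENNReal.ofReal (1 - p) := by
  simp [bernoulliNat, Measure.dirac_apply]

lemma bernoulliNat_not_le_one (p : ℝ) : bernoulliNat p {x : ℕ | ¬ x ≤ 1} = 0 := by
  simp only [bernoulliNat, Measure.add_apply, Measure.smul_apply, smul_eq_mul]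
  rw [Measure.dirac_apply, Measure.dirac_apply]
  simp [Set.indicator]

lemma joint_map_pi {Ω : Type*} [MeasurableSpace Ω] (P : Measure Ω) [IsProbabilityMeasure P]
    {n : ℕ} (f : Fin n → Ω → ℕ) (hf : ∀ i, Measurable (f i))
    (h : iIndepFun f P) :
    Measure.map (fun ω i => f i ω) P = Measure.pi (fun i => P.map (f i)) := by
  haveI : ∀ i, IsProbabilityMeasure (P.map (f i)) :=
    fun i => Measure.isProbabilityMeasure_map (hf i).aemeasurable
  refine (Measure.pi_eq fun s hs => ?_).symm
  rw [Measure.map_apply (measurable_pi_iff.2 hf) (MeasurableSet.univ_pi hs)]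
  have hpre : (fun ω i => f i ω) ⁻¹' Set.pi Set.univ s = ⋂ i ∈ Finset.univ, f i ⁻¹' s i := by
    ext ω; simp [Set.mem_pi]
  rw [hpre, h.measure_inter_preimage_eq_mul Finset.univ (fun i _ => hs i)]
  exact Finset.prod_congr rfl fun i _ => (Measure.map_apply (hf i) (hs i)).symm

lemma indep_B {Ω : Type*} [MeasurableSpace Ω] {P : Measure Ω} {N : ℕ}
    {B : Fin N → Ω → ℕ} {φ : Fin N → Ω → ℝ}
    (hindep : iIndepFun (m := mixMS N) (mixVar B φ) P) :
    iIndepFun B P := by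
  rw [iIndepFun_iff_measure_inter_preimage_eq_mul]
  intro S sets H
  classical
  set sets' : ∀ j : Fin N ⊕ Fin N, Set (mixSpace N j) := fun j => match j with
    | .inl i => sets i
    | .inr _ => Set.univ
  have H' : ∀ j ∈ S.map ⟨Sum.inl, Sum.inl_injective⟩, MeasurableSet[mixMS N j] (sets' j) := by
    intro j hj
    rw [Finset.mem_map] at hj
    obtain ⟨i, hi, rfl⟩ := hj
    exact H i hi
  have key := hindep.measure_inter_preimage_eq_mul (S.map ⟨Sum.inl, Sum.inl_injective⟩) H'
  have h1 : (⋂ j ∈ S.map ⟨Sum.inl, Sum.inl_injective⟩, mixVar B φ j ⁻¹' sets' j)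
      = ⋂ i ∈ S, B i ⁻¹' sets i := by
    ext ω; simp [Finset.mem_map, mixVar]; rfl
  have h2 : ∏ j ∈ S.map ⟨Sum.inl, Sum.inl_injective⟩, P (mixVar B φ j ⁻¹' sets' j)
      = ∏ i ∈ S, P (B i ⁻¹' sets i) := Finset.prod_map S _ _
  rw [h1, h2] at key
  exact key

lemma measurableSet_natPi {N : ℕ} (s : Set (Fin N → ℕ)) : MeasurableSet s :=
  s.to_countable.measurableSet

lemma binom_count {N : ℕ} {p : ℝ} (hp0 : 0 ≤ p) (hp1 : p ≤ 1) (k : ℕ) :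
    Measure.pi (fun _ : Fin N => bernoulliNat p)
      {b : Fin N → ℕ | (∀ i, b i ≤ 1) ∧ ∑ i, b i = k}
    = (N.choose k) • ENNReal.ofReal (p ^ k * (1 - p) ^ (N - k)) := by
  classical
  haveI : IsProbabilityMeasure (bernoulliNat p) := bernoulliNat_prob hp0 hp1
  set F : Finset (Fin N → ℕ) :=
    (Finset.powersetCard k Finset.univ).image (fun s i => if i ∈ s then 1 else 0) with hF
  have hFeq : {b : Fin N → ℕ | (∀ i, b i ≤ 1) ∧ ∑ i, b i = k} = ↑F := by
    ext b
    constructor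
    · rintro ⟨hb, hs⟩
      refine Finset.mem_coe.2 (Finset.mem_image.2 ⟨Finset.univ.filter (fun i => b i = 1), ?_, ?_⟩)
      · rw [Finset.mem_powersetCard]
        refine ⟨Finset.filter_subset _ _, ?_⟩
        rw [Finset.card_filter, ← hs]
        refine Finset.sum_congr rfl fun i _ => ?_
        rcases Nat.le_one_iff_eq_zero_or_eq_one.1 (hb i) with h | h <;> simp [h]
      · funext i
        rcases Nat.le_one_iff_eq_zero_or_eq_one.1 (hb i) with h | h <;>
          simp [Finset.mem_filter, h]
    · intro hb
      obtain ⟨s, hs, rfl⟩ := Finset.mem_image.1 (Finset.mem_coe.1 hb)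
      rw [Finset.mem_powersetCard] at hs
      constructor
      · intro i
        by_cases h : i ∈ s <;> simp [h]
      · rw [← hs.2, ← Finset.card_filter]
        congr 1
        ext i; simp
  have hinj : Set.InjOn (fun (s : Finset (Fin N)) (i : Fin N) => if i ∈ s then 1 else 0)
      ↑(Finset.powersetCard k (Finset.univ : Finset (Fin N))) := by
    intro s _ t _ h
    ext i
    have := congrFun h i
    by_cases his : i ∈ s <;> by_cases hit : i ∈ t <;> simp [his, hit] at this ⊢
  have hsingle : ∀ b ∈ F, Measure.pi (fun _ : Fin N => bernoulliNat p) {b}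
      = ENNReal.ofReal (p ^ k * (1 - p) ^ (N - k)) := by
    intro b hb
    obtain ⟨s, hs, rfl⟩ := Finset.mem_image.1 hb
    rw [Finset.mem_powersetCard] at hs
    have h1 : ({fun i => if i ∈ s then 1 else 0} : Set (Fin N → ℕ))
        = Set.pi Set.univ (fun i => {if i ∈ s then 1 else 0}) := by
      ext b; simp [funext_iff, Set.mem_pi]
    rw [h1, Measure.pi_pi]
    have h2 : ∀ i : Fin N, bernoulliNat p {if i ∈ s then 1 else 0}
        = if i ∈ s then ENNReal.ofReal p else ENNReal.ofReal (1 - p) := by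
      intro i; split <;> simp [bernoulliNat_one, bernoulliNat_zero]
    rw [Finset.prod_congr rfl fun i _ => h2 i, Finset.prod_ite, Finset.prod_const,
      Finset.prod_const]
    have hc1 : (Finset.univ.filter (fun i : Fin N => i ∈ s)).card = k := by
      rw [show Finset.univ.filter (fun i : Fin N => i ∈ s) = s by ext i; simp, hs.2]
    have hc2 : (Finset.univ.filter (fun i : Fin N => ¬ i ∈ s)).card = N - k := by
      rw [Finset.filter_not, show Finset.univ.filter (fun i : Fin N => i ∈ s) = s by ext i; simp,
        Finset.card_sdiff_of_subset (Finset.subset_univ s), Finset.card_univ, Fintype.card_fin, hs.2]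
    rw [hc1, hc2, ← ENNReal.ofReal_pow hp0, ← ENNReal.ofReal_pow (by linarith),
      ← ENNReal.ofReal_mul (by positivity)]
  have hcard : F.card = N.choose k := by
    rw [hF, Finset.card_image_of_injOn hinj, Finset.card_powersetCard, Finset.card_univ,
      Fintype.card_fin]
  rw [hFeq, show (↑F : Set (Fin N → ℕ)) = ⋃ b ∈ F, {b} by ext x; simp]
  rw [measure_biUnion_finset ?_ (fun b _ => measurableSet_natPi _)]
  · rw [Finset.sum_congr rfl hsingle, Finset.sum_const, hcard]
  · intro x _ y _ hxy
    simp [Set.disjoint_singleton, hxy]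

/-- with a LOS component `a e^{iφ_LOS}` (`a ≥ 0`), i.i.d. Bernoulli(p) gains
`B_i` and i.i.d. uniform phases `φ̃_i`, all jointly independent, the random ergodic capacity
`C_erg,LOS` is a.s. equal to `C_LOS(∑ i B_i)`, and
`P(C_erg,LOS < R) = ∑_{k=0}^N (N choose k) p^k (1−p)^{N−k} 1{C_LOS(k) < R}`. -/
theorem stmt1 {Ω : Type*} [MeasurableSpace Ω] (P : Measure Ω) [IsProbabilityMeasure P]
    (N : ℕ) (p : ℝ) (hp0 : 0 ≤ p) (hp1 : p ≤ 1) (R : ℝ) (hR : 0 < R)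
    (a : ℝ) (ha : 0 ≤ a) (φLOS : ℝ)
    (B : Fin N → Ω → ℕ) (φ : Fin N → Ω → ℝ)
    (hBmeas : ∀ i, Measurable (B i)) (hφmeas : ∀ i, Measurable (φ i))
    (hBlaw : ∀ i, Measure.map (B i) P = bernoulliNat p)
    (hφlaw : ∀ i, Measure.map (φ i) P = unifIcc)
    (hindep : iIndepFun (m := mixMS N) (mixVar B φ) P) :
    (∀ᵐ ω ∂P, ergCapRandLOS a φLOS B φ ω = ergCapLOS a (∑ i, B i ω)) ∧
    (P {ω | ergCapRandLOS a φLOS B φ ω < R}).toReal =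
      ∑ k ∈ Finset.range (N + 1),
        (N.choose k : ℝ) * p ^ k * (1 - p) ^ (N - k) * (if ergCapLOS a k < R then 1 else 0) := by
  classical
  haveI : IsProbabilityMeasure (bernoulliNat p) := bernoulliNat_prob hp0 hp1
  have hb_ae : ∀ᵐ ω ∂P, ∀ i, B i ω ≤ 1 := by
    rw [ae_all_iff]
    intro i
    have hmap : P (B i ⁻¹' {x : ℕ | ¬ x ≤ 1}) = 0 := by
      rw [← Measure.map_apply (hBmeas i) ((Set.to_countable _).measurableSet), hBlaw i]
      exact bernoulliNat_not_le_one p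
    rw [ae_iff]
    exact hmap
  have part1 : ∀ᵐ ω ∂P, ergCapRandLOS a φLOS B φ ω = ergCapLOS a (∑ i, B i ω) := by
    filter_upwards [hb_ae] with ω hω
    exact erg_eq a φLOS (fun i => B i ω) hω (fun i => φ i ω)
  refine ⟨part1, ?_⟩
  set ν := Measure.pi fun _ : Fin N => bernoulliNat p with hν
  have hsum_meas : Measurable (fun ω => ∑ i, B i ω) :=
    (measurable_of_countable (fun b : Fin N → ℕ => ∑ i, b i)).comp (measurable_pi_iff.2 hBmeas)
  have hset : P {ω | ergCapRandLOS a φLOS B φ ω < R} = P {ω | ergCapLOS a (∑ i, B i ω) < R} := by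
    apply measure_congr
    filter_upwards [part1] with ω h
    change (ergCapRandLOS a φLOS B φ ω < R) = (ergCapLOS a (∑ i, B i ω) < R)
    rw [h]
  have hlaw : Measure.map (fun ω => ∑ i, B i ω) P
      = Measure.map (fun b : Fin N → ℕ => ∑ i, b i) ν := by
    have hjoint := joint_map_pi P B hBmeas (indep_B hindep)
    have h1 : Measure.map (fun ω => ∑ i, B i ω) P
        = Measure.map (fun b : Fin N → ℕ => ∑ i, b i) (Measure.map (fun ω i => B i ω) P) := by
      rw [Measure.map_map (measurable_of_countable _) (measurable_pi_iff.2 hBmeas)]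
      rfl
    rw [h1, hjoint, hν]
    congr 1
    exact congrArg Measure.pi (funext fun i => hBlaw i)
  have hmapped : P {ω | ergCapLOS a (∑ i, B i ω) < R}
      = ν ((fun b : Fin N → ℕ => ∑ i, b i) ⁻¹' {k | ergCapLOS a k < R}) := by
    have := Measure.map_apply (μ := P) hsum_meas
      (s := {k : ℕ | ergCapLOS a k < R}) ((Set.to_countable _).measurableSet)
    rw [show {ω | ergCapLOS a (∑ i, B i ω) < R}
        = (fun ω => ∑ i, B i ω) ⁻¹' {k | ergCapLOS a k < R} from rfl, ← this, hlaw,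
      Measure.map_apply (measurable_of_countable _) ((Set.to_countable _).measurableSet)]
  have hT : ν {b : Fin N → ℕ | ∀ i, b i ≤ 1}ᶜ = 0 := by
    have h0 : ν (⋃ i : Fin N, Function.eval i ⁻¹' {x : ℕ | ¬ x ≤ 1}) = 0 :=
      measure_iUnion_null fun i => Measure.pi_eval_preimage_null _ (bernoulliNat_not_le_one p)
    refine measure_mono_null (fun b hb => ?_) h0
    simp only [Set.mem_compl_iff, Set.mem_setOf_eq, not_forall] at hb
    obtain ⟨i, hi⟩ := hb
    exact Set.mem_iUnion.2 ⟨i, hi⟩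
  have hdecomp : ((fun b : Fin N → ℕ => ∑ i, b i) ⁻¹' {k | ergCapLOS a k < R})
        ∩ {b | ∀ i, b i ≤ 1}
      = ⋃ k ∈ Finset.range (N+1),
          {b : Fin N → ℕ | ((∀ i, b i ≤ 1) ∧ ∑ i, b i = k) ∧ ergCapLOS a k < R} := by
    ext b
    simp only [Set.mem_inter_iff, Set.mem_preimage, Set.mem_setOf_eq, Set.mem_iUnion,
      Finset.mem_range]
    constructor
    · rintro ⟨hA, hT'⟩
      refine ⟨∑ i, b i, ?_, ?_⟩
      · have : ∑ i, b i ≤ ∑ _i : Fin N, 1 := Finset.sum_le_sum fun i _ => hT' i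
        simpa using Nat.lt_succ_of_le (le_trans this (by simp))
      · exact ⟨⟨hT', rfl⟩, hA⟩
    · rintro ⟨k, hk, ⟨⟨h1, h2⟩, h3⟩⟩
      exact ⟨by rw [h2]; exact h3, h1⟩
  have hcompute : ν ((fun b : Fin N → ℕ => ∑ i, b i) ⁻¹' {k | ergCapLOS a k < R})
      = ∑ k ∈ Finset.range (N+1),
          (if ergCapLOS a k < R
            then (N.choose k) • ENNReal.ofReal (p ^ k * (1 - p) ^ (N - k)) else 0) := by
    rw [← measure_inter_conull hT, hdecomp,
      measure_biUnion_finset ?_ (fun k _ => measurableSet_natPi _)]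
    · refine Finset.sum_congr rfl fun k _ => ?_
      by_cases hC : ergCapLOS a k < R
      · rw [if_pos hC, show {b : Fin N → ℕ | ((∀ i, b i ≤ 1) ∧ ∑ i, b i = k) ∧ ergCapLOS a k < R}
            = {b : Fin N → ℕ | (∀ i, b i ≤ 1) ∧ ∑ i, b i = k} from by ext b; simp [hC]]
        exact binom_count hp0 hp1 k
      · rw [if_neg hC, show {b : Fin N → ℕ | ((∀ i, b i ≤ 1) ∧ ∑ i, b i = k) ∧ ergCapLOS a k < R}
            = ∅ from by ext b; simp [hC]]
        exact measure_empty
    · intro j hj k hk hjk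
      exact Set.disjoint_left.2 fun b hb hb' => hjk (by rw [← hb.1.2, ← hb'.1.2])
  rw [hset, hmapped, hcompute, ENNReal.toReal_sum (fun k _ => ?_)]
  · refine Finset.sum_congr rfl fun k hk => ?_
    split
    · rw [nsmul_eq_mul, ENNReal.toReal_mul, ENNReal.toReal_natCast,
        ENNReal.toReal_ofReal (mul_nonneg (pow_nonneg hp0 _) (pow_nonneg (by linarith) _))]
      ring
    · simp
  · split
    · rw [nsmul_eq_mul]
      exact ENNReal.mul_ne_top (by simp) ENNReal.ofReal_ne_top
    · simp
end

section
/- For every σ > 0, ∫_0^∞ log(1+s²) · (s/σ²) · exp(−s²/(2σ²)) ds = exp(1/(2σ²)) · ∫_{1/(2σ²)}^∞ (e^{−t}/t) dt, and both integrals are finite. Equivalently, the ergodic capacity E[log₂(1+S²)] of a channel whose magnitude S is Rayleigh(σ)-distributed equals −(1/log 2) · exp(1/(2σ²)) · Ei(−1/(2σ²)). -/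
set_option maxHeartbeats 1000000

open MeasureTheory Real Filter Set Topology

lemma aux_g_int {a : ℝ} (ha : 0 < a) :
    IntegrableOn (fun t : ℝ => Real.exp (-t) / t) (Set.Ioi a) := by
  have h1 : IntegrableOn (fun t : ℝ => a⁻¹ * Real.exp (-1 * t)) (Set.Ioi a) :=
    (exp_neg_integrableOn_Ioi a one_pos).const_mul _
  refine h1.mono' ?_ ?_
  · exact ((Real.measurable_exp.comp measurable_neg).div measurable_id).aestronglyMeasurable
  · filter_upwards [ae_restrict_mem measurableSet_Ioi] with t ht
    have h0 : a < t := ht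
    have h0' : 0 < t := ha.trans h0
    rw [Real.norm_eq_abs, abs_of_nonneg (by positivity), neg_one_mul, inv_mul_eq_div]
    gcongr

lemma aux_cov {a : ℝ} (ha : 0 < a)
    (hgi : IntegrableOn (fun t : ℝ => Real.exp (-t) / t) (Set.Ioi a)) :
    IntegrableOn (fun x : ℝ => 2 * x / (1 + x ^ 2) * Real.exp (-(a * x ^ 2))) (Set.Ioi 0) ∧
    (∫ x in Set.Ioi (0 : ℝ), 2 * x / (1 + x ^ 2) * Real.exp (-(a * x ^ 2)))
      = Real.exp a * ∫ t in Set.Ioi a, Real.exp (-t) / t := by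
  have hφcont : ContinuousOn (fun s : ℝ => a * (1 + s ^ 2)) (Set.Ici 0) :=
    (continuous_const.mul (continuous_const.add (continuous_pow 2))).continuousOn
  have hφtop : Tendsto (fun s : ℝ => a * (1 + s ^ 2)) atTop atTop := by
    have h1 : Tendsto (fun s : ℝ => 1 + s ^ 2) atTop atTop :=
      tendsto_atTop_add_const_left _ 1 (tendsto_pow_atTop two_ne_zero)
    exact h1.const_mul_atTop ha
  have hφderiv : ∀ x ∈ Set.Ioi (0 : ℝ),
      HasDerivWithinAt (fun s : ℝ => a * (1 + s ^ 2)) (2 * a * x) (Set.Ioi x) x := by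
    intro x _
    have h : HasDerivAt (fun s : ℝ => a * (1 + s ^ 2)) (2 * a * x) x := by
      have h0 := ((hasDerivAt_pow 2 x).const_add (1 : ℝ)).const_mul a
      exact h0.congr_deriv (by push_cast; ring)
    exact h.hasDerivWithinAt
  have hg_cont : ContinuousOn (fun t : ℝ => Real.exp (-t) / t)
      ((fun s : ℝ => a * (1 + s ^ 2)) '' Set.Ioi 0) := by
    apply ContinuousOn.mono (s := {t : ℝ | t ≠ 0})
    · exact ContinuousOn.div (Real.continuous_exp.comp continuous_neg).continuousOn
        continuousOn_id fun t ht => ht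
    · rintro t ⟨s, hs, rfl⟩
      have hs' : (0 : ℝ) < s := hs
      show a * (1 + s ^ 2) ≠ 0
      positivity
  have hg1 : IntegrableOn (fun t : ℝ => Real.exp (-t) / t)
      ((fun s : ℝ => a * (1 + s ^ 2)) '' Set.Ici 0) := by
    refine (Iff.mpr integrableOn_Ici_iff_integrableOn_Ioi hgi).mono_set ?_
    rintro t ⟨s, hs, rfl⟩
    have hs' : (0 : ℝ) ≤ s := hs
    show a ≤ a * (1 + s ^ 2)
    nlinarith
  have hg2 : IntegrableOn (fun x : ℝ =>
      ((fun t : ℝ => Real.exp (-t) / t) ∘ (fun s : ℝ => a * (1 + s ^ 2))) x * (2 * a * x))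
      (Set.Ici 0) := by
    have hmaj : IntegrableOn (fun x : ℝ => Real.exp (-a * x ^ 2)) (Set.Ici 0) :=
      (integrable_exp_neg_mul_sq ha).integrableOn
    refine hmaj.mono' ?_ ?_
    · have hc : Continuous fun x : ℝ => Real.exp (-(a * (1 + x ^ 2))) / (a * (1 + x ^ 2))
          * (2 * a * x) := by
        apply Continuous.mul
        · apply Continuous.div
          · exact Real.continuous_exp.comp
              (continuous_const.mul (continuous_const.add (continuous_pow 2))).neg
          · exact continuous_const.mul (continuous_const.add (continuous_pow 2))
          · intro x; positivity
        · exact continuous_const.mul continuous_id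
      exact hc.aestronglyMeasurable
    · filter_upwards [ae_restrict_mem measurableSet_Ici] with x hx
      have hx' : (0 : ℝ) ≤ x := hx
      have h1 : (0 : ℝ) < 1 + x ^ 2 := by positivity
      show ‖Real.exp (-(a * (1 + x ^ 2))) / (a * (1 + x ^ 2)) * (2 * a * x)‖
        ≤ Real.exp (-a * x ^ 2)
      rw [Real.norm_eq_abs, abs_of_nonneg (by positivity)]
      have heq : Real.exp (-(a * (1 + x ^ 2))) / (a * (1 + x ^ 2)) * (2 * a * x)
          = Real.exp (-(a * (1 + x ^ 2))) * (2 * x / (1 + x ^ 2)) := by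
        field_simp
      rw [heq]
      have h2 : Real.exp (-(a * (1 + x ^ 2))) ≤ Real.exp (-a * x ^ 2) :=
        Real.exp_le_exp.mpr (by nlinarith)
      have h3 : 2 * x / (1 + x ^ 2) ≤ 1 := by
        rw [div_le_one h1]; nlinarith [sq_nonneg (x - 1)]
      calc Real.exp (-(a * (1 + x ^ 2))) * (2 * x / (1 + x ^ 2))
          ≤ Real.exp (-a * x ^ 2) * 1 :=
            mul_le_mul h2 h3 (by positivity) (Real.exp_pos _).le
        _ = Real.exp (-a * x ^ 2) := mul_one _
  have cov := integral_comp_mul_deriv_Ioi hφcont hφtop hφderiv hg_cont hg1 hg2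
  have hφ0 : a * (1 + (0 : ℝ) ^ 2) = a := by ring
  rw [hφ0] at cov
  have hrel : ∀ x : ℝ,
      ((fun t : ℝ => Real.exp (-t) / t) ∘ (fun s : ℝ => a * (1 + s ^ 2))) x * (2 * a * x)
      = Real.exp (-a) * (2 * x / (1 + x ^ 2) * Real.exp (-(a * x ^ 2))) := by
    intro x
    have h1 : (0 : ℝ) < 1 + x ^ 2 := by positivity
    show Real.exp (-(a * (1 + x ^ 2))) / (a * (1 + x ^ 2)) * (2 * a * x) = _
    rw [show -(a * (1 + x ^ 2)) = -a + -(a * x ^ 2) by ring, Real.exp_add]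
    field_simp
  constructor
  · have h := (hg2.mono_set Set.Ioi_subset_Ici_self).const_mul (Real.exp a)
    refine h.congr (Filter.Eventually.of_forall fun x => ?_)
    simp only [hrel x]
    rw [← mul_assoc, ← Real.exp_add]
    simp
  · calc (∫ x in Set.Ioi (0 : ℝ), 2 * x / (1 + x ^ 2) * Real.exp (-(a * x ^ 2)))
        = ∫ x in Set.Ioi (0 : ℝ), Real.exp a *
            (((fun t : ℝ => Real.exp (-t) / t) ∘ (fun s : ℝ => a * (1 + s ^ 2))) x
              * (2 * a * x)) := by
          refine setIntegral_congr_fun measurableSet_Ioi fun x _ => ?_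
          simp only [hrel x]
          rw [← mul_assoc, ← Real.exp_add]
          simp
      _ = Real.exp a * ∫ x in Set.Ioi (0 : ℝ),
            ((fun t : ℝ => Real.exp (-t) / t) ∘ (fun s : ℝ => a * (1 + s ^ 2))) x
              * (2 * a * x) := integral_const_mul _ _
      _ = Real.exp a * ∫ t in Set.Ioi a, Real.exp (-t) / t := by rw [cov]

lemma aux_f0_int {a : ℝ} (ha : 0 < a) :
    IntegrableOn (fun s : ℝ => Real.log (1 + s ^ 2) * (2 * a * s) * Real.exp (-(a * s ^ 2)))
      (Set.Ioi 0) := by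
  have hmaj : IntegrableOn (fun x : ℝ => 2 * a * (x ^ (3 : ℝ) * Real.exp (-a * x ^ 2)))
      (Set.Ioi 0) :=
    (integrableOn_rpow_mul_exp_neg_mul_sq ha (by norm_num : (-1 : ℝ) < 3)).const_mul (2 * a)
  refine hmaj.mono' ?_ ?_
  · have hc : Continuous fun s : ℝ =>
        Real.log (1 + s ^ 2) * (2 * a * s) * Real.exp (-(a * s ^ 2)) := by
      apply Continuous.mul
      · apply Continuous.mul
        · exact (continuous_const.add (continuous_pow 2)).log fun x => by simp only [Pi.add_apply]; positivity
        · exact continuous_const.mul continuous_id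
      · exact Real.continuous_exp.comp (continuous_const.mul (continuous_pow 2)).neg
    exact hc.aestronglyMeasurable
  · filter_upwards [ae_restrict_mem measurableSet_Ioi] with x hx
    have hx' : (0 : ℝ) < x := hx
    have hlog0 : 0 ≤ Real.log (1 + x ^ 2) := Real.log_nonneg (by nlinarith)
    have hlog1 : Real.log (1 + x ^ 2) ≤ x ^ 2 := by
      have := Real.log_le_sub_one_of_pos (show (0:ℝ) < 1 + x ^ 2 by positivity)
      linarith
    rw [Real.norm_eq_abs, abs_of_nonneg (by positivity)]
    rw [show (3 : ℝ) = ((3 : ℕ) : ℝ) by norm_num, Real.rpow_natCast]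
    have he : (0:ℝ) < Real.exp (-a * x ^ 2) := Real.exp_pos _
    have harg : -(a * x ^ 2) = -a * x ^ 2 := by ring
    rw [harg]
    nlinarith [mul_le_mul_of_nonneg_right hlog1 (le_of_lt (mul_pos (mul_pos (by positivity : (0:ℝ) < 2 * a) hx') he))]

lemma aux_tendsto {a : ℝ} (ha : 0 < a) :
    Tendsto (fun s : ℝ => -(Real.log (1 + s ^ 2) * Real.exp (-(a * s ^ 2)))) atTop (𝓝 0) := by
  rw [show (0 : ℝ) = -0 by ring]
  apply Filter.Tendsto.neg
  have t1 : Tendsto (fun y : ℝ => y ^ 1 * Real.exp (-y)) atTop (𝓝 0) :=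
    tendsto_pow_mul_exp_neg_atTop_nhds_zero 1
  have t2 : Tendsto (fun s : ℝ => a * s ^ 2) atTop atTop :=
    (tendsto_pow_atTop two_ne_zero).const_mul_atTop ha
  have t3 : Tendsto (fun s : ℝ => (1 / a) * ((a * s ^ 2) ^ 1 * Real.exp (-(a * s ^ 2))))
      atTop (𝓝 ((1 / a) * 0)) := (t1.comp t2).const_mul (1 / a)
  rw [mul_zero] at t3
  have t4 : Tendsto (fun s : ℝ => s ^ 2 * Real.exp (-(a * s ^ 2))) atTop (𝓝 0) := by
    refine t3.congr fun s => ?_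
    field_simp
  apply squeeze_zero (fun s => mul_nonneg (Real.log_nonneg (by nlinarith)) (Real.exp_pos _).le)
    (fun s => ?_) t4
  have hlog1 : Real.log (1 + s ^ 2) ≤ s ^ 2 := by
    have := Real.log_le_sub_one_of_pos (show (0:ℝ) < 1 + s ^ 2 by positivity)
    linarith
  exact mul_le_mul_of_nonneg_right hlog1 (Real.exp_pos _).le

lemma aux_deriv {a x : ℝ} :
    HasDerivAt (fun s : ℝ => -(Real.log (1 + s ^ 2) * Real.exp (-(a * s ^ 2))))
      (Real.log (1 + x ^ 2) * (2 * a * x) * Real.exp (-(a * x ^ 2))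
        - 2 * x / (1 + x ^ 2) * Real.exp (-(a * x ^ 2))) x := by
  have hx1 : (0 : ℝ) < 1 + x ^ 2 := by positivity
  have d1 : HasDerivAt (fun s : ℝ => Real.log (1 + s ^ 2)) (2 * x / (1 + x ^ 2)) x := by
    have h := ((hasDerivAt_pow 2 x).const_add (1 : ℝ)).log hx1.ne'
    convert h using 1
    push_cast; ring
  have d2 : HasDerivAt (fun s : ℝ => Real.exp (-(a * s ^ 2)))
      (Real.exp (-(a * x ^ 2)) * (-(2 * a * x))) x := by
    have h := (((hasDerivAt_pow 2 x).const_mul a).neg).exp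
    exact h.congr_deriv (by simp only [Pi.neg_apply]; push_cast; ring)
  have h := (d1.mul d2).neg
  exact h.congr_deriv (by ring)

lemma aux_main {a : ℝ} (ha : 0 < a) :
    (∫ s in Set.Ioi (0 : ℝ), Real.log (1 + s ^ 2) * (2 * a * s) * Real.exp (-(a * s ^ 2)))
      = Real.exp a * ∫ t in Set.Ioi a, Real.exp (-t) / t := by
  obtain ⟨hIh, hcov⟩ := aux_cov ha (aux_g_int ha)
  have hf0 := aux_f0_int ha
  have ftc := integral_Ioi_of_hasDerivAt_of_tendsto'
    (f := fun s : ℝ => -(Real.log (1 + s ^ 2) * Real.exp (-(a * s ^ 2))))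
    (f' := fun x : ℝ => Real.log (1 + x ^ 2) * (2 * a * x) * Real.exp (-(a * x ^ 2))
        - 2 * x / (1 + x ^ 2) * Real.exp (-(a * x ^ 2)))
    (fun x _ => aux_deriv) (hf0.sub hIh) (aux_tendsto ha)
  have h0 : -(Real.log (1 + (0:ℝ) ^ 2) * Real.exp (-(a * (0:ℝ) ^ 2))) = 0 := by
    norm_num
  simp only [h0, sub_zero] at ftc
  rw [integral_sub hf0 hIh] at ftc
  have : (∫ s in Set.Ioi (0 : ℝ), Real.log (1 + s ^ 2) * (2 * a * s) * Real.exp (-(a * s ^ 2)))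
      = ∫ x in Set.Ioi (0 : ℝ), 2 * x / (1 + x ^ 2) * Real.exp (-(a * x ^ 2)) := by
    linarith
  rw [this, hcov]

/-- for every `σ > 0`,
`∫_0^∞ log(1+s²) (s/σ²) exp(−s²/(2σ²)) ds = exp(1/(2σ²)) ∫_{1/(2σ²)}^∞ e^{−t}/t dt`,
both integrals being finite; equivalently, the ergodic capacity `E[log₂(1+S²)]` of a
Rayleigh(σ) channel equals `(1/log 2) · exp(1/(2σ²)) ∫_{1/(2σ²)}^∞ e^{−t}/t dt`
(`= −(1/log 2) e^{1/(2σ²)} Ei(−1/(2σ²))`). -/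
theorem stmt7 (σ : ℝ) (hσ : 0 < σ) :
    IntegrableOn (fun s : ℝ =>
      Real.log (1 + s ^ 2) * (s / σ ^ 2) * Real.exp (-s ^ 2 / (2 * σ ^ 2))) (Set.Ioi 0) ∧
    IntegrableOn (fun t : ℝ => Real.exp (-t) / t) (Set.Ioi (1 / (2 * σ ^ 2))) ∧
    ((∫ s in Set.Ioi (0 : ℝ),
        Real.log (1 + s ^ 2) * (s / σ ^ 2) * Real.exp (-s ^ 2 / (2 * σ ^ 2))) =
      Real.exp (1 / (2 * σ ^ 2)) * ∫ t in Set.Ioi (1 / (2 * σ ^ 2)), Real.exp (-t) / t) ∧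
    ((∫ s in Set.Ioi (0 : ℝ),
        Real.logb 2 (1 + s ^ 2) * ((s / σ ^ 2) * Real.exp (-s ^ 2 / (2 * σ ^ 2)))) =
      (1 / Real.log 2) * Real.exp (1 / (2 * σ ^ 2)) *
        ∫ t in Set.Ioi (1 / (2 * σ ^ 2)), Real.exp (-t) / t) := by
  have hσ2 : (0 : ℝ) < σ ^ 2 := by positivity
  set a : ℝ := 1 / (2 * σ ^ 2) with ha_def
  have ha : 0 < a := by rw [ha_def]; positivity
  have hfeq : ∀ s : ℝ, Real.log (1 + s ^ 2) * (s / σ ^ 2) * Real.exp (-s ^ 2 / (2 * σ ^ 2))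
      = Real.log (1 + s ^ 2) * (2 * a * s) * Real.exp (-(a * s ^ 2)) := by
    intro s
    have h1 : -s ^ 2 / (2 * σ ^ 2) = -(a * s ^ 2) := by
      rw [ha_def]; field_simp
    rw [h1, ha_def]
    have h2 : s / σ ^ 2 = 2 * (1 / (2 * σ ^ 2)) * s := by
      field_simp
    rw [h2]
  have hmain := aux_main ha
  refine ⟨?_, aux_g_int ha, ?_, ?_⟩
  · simp only [hfeq]
    exact aux_f0_int ha
  · simp only [hfeq]
    exact hmain
  · have hlogb : ∀ s : ℝ, Real.logb 2 (1 + s ^ 2) * ((s / σ ^ 2) * Real.exp (-s ^ 2 / (2 * σ ^ 2)))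
        = (1 / Real.log 2) * (Real.log (1 + s ^ 2) * (2 * a * s) * Real.exp (-(a * s ^ 2))) := by
      intro s
      rw [← hfeq s, Real.logb]
      ring
    simp only [hlogb]
    rw [integral_const_mul, hmain]
    ring
end

section
/- Define E : (0,∞) → ℝ by E(x) = e^x · ∫_x^∞ (e^{−t}/t) dt. Then E(x) is finite for every x > 0 and E is strictly monotonically decreasing on (0,∞); i.e., for all 0 < x < y, E(y) < E(x). -/
open MeasureTheory

/-- `E(x) = e^x ∫_x^∞ e^{−t}/t dt = −e^x Ei(−x)` for `x > 0`. -/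
noncomputable def Efun (x : ℝ) : ℝ := Real.exp x * ∫ t in Set.Ioi x, Real.exp (-t) / t

lemma integrable_aux {x : ℝ} (hx : 0 < x) :
    IntegrableOn (fun t : ℝ => Real.exp (-t) / t) (Set.Ioi x) := by
  have hbase : IntegrableOn (fun t : ℝ => Real.exp (-1 * t) * (1 / x)) (Set.Ioi x) :=
    (exp_neg_integrableOn_Ioi x one_pos).mul_const _
  refine Integrable.mono hbase ?_ ?_
  · exact ((Real.measurable_exp.comp measurable_neg).div measurable_id).aestronglyMeasurable
  · filter_upwards [ae_restrict_mem measurableSet_Ioi] with t ht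
    have htpos : 0 < t := hx.trans ht
    rw [Real.norm_eq_abs, Real.norm_eq_abs, abs_of_nonneg (by positivity),
      abs_of_nonneg (by positivity), neg_one_mul, div_eq_mul_one_div]
    gcongr
    exact le_of_lt ht

lemma integrable_aux2 {x : ℝ} (hx : 0 < x) :
    IntegrableOn (fun u : ℝ => Real.exp (-u) / (u + x)) (Set.Ioi 0) := by
  have hbase : IntegrableOn (fun u : ℝ => Real.exp (-1 * u) * (1 / x)) (Set.Ioi (0:ℝ)) :=
    (exp_neg_integrableOn_Ioi 0 one_pos).mul_const _
  refine Integrable.mono hbase ?_ ?_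
  · exact ((Real.measurable_exp.comp measurable_neg).div
      (measurable_id.add_const x)).aestronglyMeasurable
  · filter_upwards [ae_restrict_mem measurableSet_Ioi] with u hu
    have : (0:ℝ) < u := hu
    rw [Real.norm_eq_abs, Real.norm_eq_abs, abs_of_nonneg (by positivity),
      abs_of_nonneg (by positivity), neg_one_mul, div_eq_mul_one_div]
    gcongr
    linarith

lemma shift_eq (x : ℝ) :
    Efun x = ∫ u in Set.Ioi (0:ℝ), Real.exp (-u) / (u + x) := by
  have hmp : MeasurePreserving (fun u : ℝ => u + x) volume volume :=
    measurePreserving_add_right volume x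
  have hemb : MeasurableEmbedding (fun u : ℝ => u + x) :=
    (Homeomorph.addRight x).measurableEmbedding
  have hpre : (fun u : ℝ => u + x) ⁻¹' Set.Ioi x = Set.Ioi 0 := by
    ext u; simp [lt_add_iff_pos_left]
  have h := hmp.setIntegral_preimage_emb hemb (fun t => Real.exp (-t) / t) (Set.Ioi x)
  rw [hpre] at h
  unfold Efun
  rw [← h, ← integral_const_mul]
  congr 1
  ext u
  rw [mul_div_assoc', ← Real.exp_add]
  ring_nf

/-- `E(x) = e^x ∫_x^∞ e^{−t}/t dt` is finite for every `x > 0` (the defining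
integral is finite) and `E` is strictly monotonically decreasing on `(0, ∞)`. -/
theorem stmt8 :
    (∀ x : ℝ, 0 < x → IntegrableOn (fun t : ℝ => Real.exp (-t) / t) (Set.Ioi x)) ∧
    (∀ x y : ℝ, 0 < x → x < y → Efun y < Efun x) := by
  constructor
  · exact fun x hx => integrable_aux hx
  · intro x y hx hxy
    have hy : 0 < y := hx.trans hxy
    have hix := integrable_aux2 hx
    have hiy := integrable_aux2 hy
    rw [shift_eq x, shift_eq y, ← sub_pos, ← integral_sub hix hiy]
    set f : ℝ → ℝ := fun u => Real.exp (-u) / (u + x) - Real.exp (-u) / (u + y) with hf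
    have hfpos : ∀ u ∈ Set.Ioi (0:ℝ), 0 < f u := by
      intro u hu
      have hu' : (0:ℝ) < u := hu
      have h1 : 0 < u + x := by linarith
      have h2 : u + x < u + y := by linarith
      have : Real.exp (-u) / (u + y) < Real.exp (-u) / (u + x) :=
        div_lt_div_of_pos_left (Real.exp_pos _) h1 h2
      simp only [hf]; linarith
    have hnn : 0 ≤ᵐ[volume.restrict (Set.Ioi (0:ℝ))] f := by
      filter_upwards [ae_restrict_mem measurableSet_Ioi] with u hu
      exact (hfpos u hu).le
    have hint : IntegrableOn f (Set.Ioi (0:ℝ)) := hix.sub hiy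
    refine (setIntegral_pos_iff_support_of_nonneg_ae hnn hint).mpr ?_
    have hsub : Set.Ioi (0:ℝ) ⊆ Function.support f ∩ Set.Ioi 0 := fun u hu =>
      ⟨ne_of_gt (hfpos u hu), hu⟩
    calc (0:ENNReal) < volume (Set.Ioi (0:ℝ)) := by simp
      _ ≤ volume (Function.support f ∩ Set.Ioi 0) := measure_mono hsub
end
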